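/- Let R_{g,n} = ℂ[α,β,γ,δ₁,…,δ_n]/(γ^{g+1}, δ₁²+β−2, …, δ_n²+β−2). Let V ⊆ ℂ[ω,β,γ,δ₁,…,δ_n] (where ω = α + (δ₁+⋯+δ_n)/2) be the ℂ-linear span of all monomials ω^j β^k γ^s δ₁^{a₁}⋯δ_n^{a_n} with s ≤ g and a_i ∈ {0,1}. Then the composition V ↪ ℂ[α,β,γ,δ₁,…,δ_n] ↠ R_{g,n} is a ℂ-linear isomorphism. -/

import Mathlib

/-!
STATEMENT 12: Let `R_{g,n} = ℂ[ω,β,γ,δ₁,…,δ_n]/(γ^{g+1}, δ₁²+β−2, …, δ_n²+β−2)`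
(using the identification `ℂ[α,β,γ,δᵢ] = ℂ[ω,β,γ,δᵢ]` via `ω = α + (Σδᵢ)/2`).
Let `V` be the ℂ-linear span of the monomials `ω^j β^k γ^s δ₁^{a₁}⋯δ_n^{a_n}` with
`s ≤ g` and `a_i ∈ {0,1}`.  Then the composition `V ↪ ℂ[ω,β,γ,δ₁,…,δ_n] ↠ R_{g,n}`
is a ℂ-linear isomorphism (i.e., bijective).
Variables: `ω = X (inl 0)`, `β = X (inl 1)`, `γ = X (inl 2)`, `δ_i = X (inr i)`.
-/

open MvPolynomial

/-- The ideal `(γ^{g+1}, δ₁²+β−2, …, δ_n²+β−2)`. -/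
noncomputable def Stmt12.rel (n g : ℕ) : Ideal (MvPolynomial (Fin 3 ⊕ Fin n) ℂ) :=
  Ideal.span ({(X (Sum.inl 2) : MvPolynomial (Fin 3 ⊕ Fin n) ℂ) ^ (g + 1)} ∪
    Set.range fun i : Fin n =>
      (X (Sum.inr i) : MvPolynomial (Fin 3 ⊕ Fin n) ℂ) ^ 2 + X (Sum.inl 1) - 2)

/-- The span `V` of the monomials `ω^j β^k γ^s δ^a`, `s ≤ g`, `a_i ∈ {0,1}`. -/
noncomputable def Stmt12.V (n g : ℕ) : Submodule ℂ (MvPolynomial (Fin 3 ⊕ Fin n) ℂ) :=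
  Submodule.span ℂ
    {p | ∃ (j k s : ℕ) (a : Fin n → ℕ), s ≤ g ∧ (∀ i, a i ≤ 1) ∧
      p = X (Sum.inl 0) ^ j * X (Sum.inl 1) ^ k * X (Sum.inl 2) ^ s *
            ∏ i, X (Sum.inr i) ^ a i}

namespace Stmt12

open Sum Finsupp

/-- The normal form of a monomial with exponent vector `d`. -/
noncomputable def nf (n g : ℕ) (d : (Fin 3 ⊕ Fin n) →₀ ℕ) : MvPolynomial (Fin 3 ⊕ Fin n) ℂ :=
  if d (inl 2) ≤ g then
    (2 - X (inl 1)) ^ (∑ i : Fin n, d (inr i) / 2) *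
      (X (inl 0) ^ d (inl 0) * X (inl 1) ^ d (inl 1) * X (inl 2) ^ d (inl 2) *
        ∏ i : Fin n, X (inr i) ^ (d (inr i) % 2))
  else 0

/-- The ℂ-linear normal-form operator. -/
noncomputable def N (n g : ℕ) :
    MvPolynomial (Fin 3 ⊕ Fin n) ℂ →ₗ[ℂ] MvPolynomial (Fin 3 ⊕ Fin n) ℂ :=
  (basisMonomials (Fin 3 ⊕ Fin n) ℂ).constr ℂ (nf n g)

lemma N_monomial (n g : ℕ) (d) (c : ℂ) : N n g (monomial d c) = c • nf n g d := by
  have h : (monomial d c : MvPolynomial (Fin 3 ⊕ Fin n) ℂ) = c • monomial d 1 := by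
    rw [smul_monomial, smul_eq_mul, mul_one]
  rw [h, map_smul]
  congr 1
  exact (basisMonomials (Fin 3 ⊕ Fin n) ℂ).constr_basis ℂ (nf n g) d

lemma monomial_eq_prod (n : ℕ) (d : (Fin 3 ⊕ Fin n) →₀ ℕ) :
    (monomial d 1 : MvPolynomial (Fin 3 ⊕ Fin n) ℂ) =
      X (inl 0) ^ d (inl 0) * X (inl 1) ^ d (inl 1) * X (inl 2) ^ d (inl 2) *
        ∏ i : Fin n, X (inr i) ^ d (inr i) := by
  rw [monomial_eq, C_1, one_mul,
    Finsupp.prod_fintype _ _ (fun i => pow_zero _), Fintype.prod_sum_type]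
  rw [show (∏ a : Fin 3, (X (inl a) : MvPolynomial (Fin 3 ⊕ Fin n) ℂ) ^ d (inl a)) =
      X (inl 0) ^ d (inl 0) * X (inl 1) ^ d (inl 1) * X (inl 2) ^ d (inl 2) from
    Fin.prod_univ_three _]

lemma nf_gamma_top (n g : ℕ) (d : (Fin 3 ⊕ Fin n) →₀ ℕ) :
    nf n g (d + Finsupp.single (inl 2) (g + 1)) = 0 := by
  rw [nf, if_neg]
  have : (d + Finsupp.single (inl 2) (g+1) : (Fin 3 ⊕ Fin n) →₀ ℕ) (inl 2)
      = d (inl 2) + (g+1) := by simp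
  omega

lemma nf_beta (n g : ℕ) (d : (Fin 3 ⊕ Fin n) →₀ ℕ) :
    nf n g (d + Finsupp.single (inl 1) 1) = X (inl 1) * nf n g d := by
  rw [nf, nf]
  have h2 : (d + Finsupp.single (inl 1) 1 : (Fin 3 ⊕ Fin n) →₀ ℕ) (inl 2) = d (inl 2) := by
    simp [Finsupp.single_apply]
  have h0 : (d + Finsupp.single (inl 1) 1 : (Fin 3 ⊕ Fin n) →₀ ℕ) (inl 0) = d (inl 0) := by
    simp [Finsupp.single_apply]
  have h1 : (d + Finsupp.single (inl 1) 1 : (Fin 3 ⊕ Fin n) →₀ ℕ) (inl 1) = d (inl 1) + 1 := by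
    simp
  have hr : ∀ i : Fin n,
      (d + Finsupp.single (inl 1) 1 : (Fin 3 ⊕ Fin n) →₀ ℕ) (inr i) = d (inr i) := by
    intro i; simp
  simp only [h0, h1, h2, hr]
  split
  · ring
  · rw [mul_zero]

lemma nf_delta (n g : ℕ) (d : (Fin 3 ⊕ Fin n) →₀ ℕ) (j : Fin n) :
    nf n g (d + Finsupp.single (inr j) 2) = (2 - X (inl 1)) * nf n g d := by
  rw [nf, nf]
  have h2 : (d + Finsupp.single (inr j) 2 : (Fin 3 ⊕ Fin n) →₀ ℕ) (inl 2) = d (inl 2) := by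
    simp [Finsupp.single_apply]
  have h0 : (d + Finsupp.single (inr j) 2 : (Fin 3 ⊕ Fin n) →₀ ℕ) (inl 0) = d (inl 0) := by
    simp [Finsupp.single_apply]
  have h1 : (d + Finsupp.single (inr j) 2 : (Fin 3 ⊕ Fin n) →₀ ℕ) (inl 1) = d (inl 1) := by
    simp [Finsupp.single_apply]
  have hr : ∀ i : Fin n,
      (d + Finsupp.single (inr j) 2 : (Fin 3 ⊕ Fin n) →₀ ℕ) (inr i)
        = d (inr i) + if j = i then 2 else 0 := by
    intro i; simp [Finsupp.single_apply]
  have hsum : ∑ i : Fin n, (d + Finsupp.single (inr j) 2 : (Fin 3 ⊕ Fin n) →₀ ℕ) (inr i) / 2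
      = (∑ i : Fin n, d (inr i) / 2) + 1 := by
    simp only [hr]
    rw [show (∑ i : Fin n, (d (inr i) + if j = i then 2 else 0) / 2)
        = ∑ i : Fin n, (d (inr i) / 2 + if j = i then 1 else 0) from
      Finset.sum_congr rfl (fun i _ => by split <;> omega)]
    rw [Finset.sum_add_distrib, Finset.sum_ite_eq Finset.univ j (fun _ => 1)]
    simp
  have hprod : (∏ i : Fin n,
        (X (inr i) : MvPolynomial (Fin 3 ⊕ Fin n) ℂ)
          ^ ((d + Finsupp.single (inr j) 2 : (Fin 3 ⊕ Fin n) →₀ ℕ) (inr i) % 2))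
      = ∏ i : Fin n, X (inr i) ^ (d (inr i) % 2) := by
    refine Finset.prod_congr rfl (fun i _ => ?_)
    rw [hr]
    congr 1
    split <;> omega
  simp only [h0, h1, h2, hsum, hprod]
  split
  · ring
  · rw [mul_zero]

lemma gamma_mem (n g : ℕ) :
    (X (inl 2) : MvPolynomial (Fin 3 ⊕ Fin n) ℂ) ^ (g + 1) ∈ rel n g :=
  Ideal.subset_span (Or.inl rfl)

lemma delta_mem (n g : ℕ) (j : Fin n) :
    (X (inr j) : MvPolynomial (Fin 3 ⊕ Fin n) ℂ) ^ 2 + X (inl 1) - 2 ∈ rel n g :=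
  Ideal.subset_span (Or.inr ⟨j, rfl⟩)

lemma mk_delta_sq (n g : ℕ) (j : Fin n) :
    Ideal.Quotient.mk (rel n g) (X (inr j) ^ 2)
      = Ideal.Quotient.mk (rel n g) (2 - X (inl 1)) := by
  rw [Ideal.Quotient.eq]
  have : (X (inr j) : MvPolynomial (Fin 3 ⊕ Fin n) ℂ) ^ 2 - (2 - X (inl 1))
      = X (inr j) ^ 2 + X (inl 1) - 2 := by ring
  rw [this]
  exact delta_mem n g j

lemma mk_delta_pow (n g : ℕ) (j : Fin n) (a : ℕ) :
    Ideal.Quotient.mk (rel n g) (X (inr j) ^ a)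
      = Ideal.Quotient.mk (rel n g) ((2 - X (inl 1)) ^ (a / 2) * X (inr j) ^ (a % 2)) := by
  induction a using Nat.strong_induction_on with
  | _ a ih =>
    match a with
    | 0 => simp
    | 1 => simp
    | (a + 2) =>
      have h1 : (a + 2) / 2 = a / 2 + 1 := by omega
      have h2 : (a + 2) % 2 = a % 2 := by omega
      rw [h1, h2, pow_add, map_mul, ih a (by omega), mk_delta_sq, ← map_mul]
      congr 1
      ring

lemma mk_prod_delta (n g : ℕ) (d : (Fin 3 ⊕ Fin n) →₀ ℕ) :
    Ideal.Quotient.mk (rel n g) (∏ i : Fin n, X (inr i) ^ d (inr i))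
      = Ideal.Quotient.mk (rel n g)
          ((2 - X (inl 1)) ^ (∑ i : Fin n, d (inr i) / 2) *
            ∏ i : Fin n, X (inr i) ^ (d (inr i) % 2)) := by
  rw [map_mul, map_prod, map_prod]
  calc ∏ i : Fin n, Ideal.Quotient.mk (rel n g) (X (inr i) ^ d (inr i))
      = ∏ i : Fin n, Ideal.Quotient.mk (rel n g)
          ((2 - X (inl 1)) ^ (d (inr i) / 2) * X (inr i) ^ (d (inr i) % 2)) :=
        Finset.prod_congr rfl (fun i _ => mk_delta_pow n g i _)
    _ = Ideal.Quotient.mk (rel n g)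
          (∏ i : Fin n, (2 - X (inl 1)) ^ (d (inr i) / 2) * X (inr i) ^ (d (inr i) % 2)) :=
        (map_prod _ _ _).symm
    _ = _ := by
        rw [Finset.prod_mul_distrib, Finset.prod_pow_eq_pow_sum, map_mul, map_prod]

lemma mk_nf (n g : ℕ) (d : (Fin 3 ⊕ Fin n) →₀ ℕ) :
    Ideal.Quotient.mk (rel n g) (nf n g d)
      = Ideal.Quotient.mk (rel n g) (monomial d 1) := by
  by_cases h : d (inl 2) ≤ g
  · rw [nf, if_pos h, monomial_eq_prod]
    have e1 : (2 - X (inl 1) : MvPolynomial (Fin 3 ⊕ Fin n) ℂ)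
          ^ (∑ i : Fin n, d (inr i) / 2) *
        (X (inl 0) ^ d (inl 0) * X (inl 1) ^ d (inl 1) * X (inl 2) ^ d (inl 2) *
          ∏ i : Fin n, X (inr i) ^ (d (inr i) % 2))
      = (X (inl 0) ^ d (inl 0) * X (inl 1) ^ d (inl 1) * X (inl 2) ^ d (inl 2)) *
        ((2 - X (inl 1)) ^ (∑ i : Fin n, d (inr i) / 2) *
          ∏ i : Fin n, X (inr i) ^ (d (inr i) % 2)) := by ring
    have e2 : (X (inl 0) : MvPolynomial (Fin 3 ⊕ Fin n) ℂ) ^ d (inl 0) *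
          X (inl 1) ^ d (inl 1) * X (inl 2) ^ d (inl 2) *
          ∏ i : Fin n, X (inr i) ^ d (inr i)
      = (X (inl 0) ^ d (inl 0) * X (inl 1) ^ d (inl 1) * X (inl 2) ^ d (inl 2)) *
          ∏ i : Fin n, X (inr i) ^ d (inr i) := by ring
    rw [e1, e2, map_mul, map_mul, ← mk_prod_delta, ← map_mul, ← map_mul]
  · rw [nf, if_neg h, map_zero, monomial_eq_prod]
    symm
    rw [Ideal.Quotient.eq_zero_iff_mem]
    have hd : (X (inl 2) : MvPolynomial (Fin 3 ⊕ Fin n) ℂ) ^ d (inl 2)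
        = X (inl 2) ^ (g + 1) * X (inl 2) ^ (d (inl 2) - (g + 1)) := by
      rw [← pow_add]
      congr 1
      omega
    have e : (X (inl 0) : MvPolynomial (Fin 3 ⊕ Fin n) ℂ) ^ d (inl 0) *
          X (inl 1) ^ d (inl 1) * X (inl 2) ^ d (inl 2) *
          ∏ i : Fin n, X (inr i) ^ d (inr i)
        = (X (inl 0) ^ d (inl 0) * X (inl 1) ^ d (inl 1) *
            X (inl 2) ^ (d (inl 2) - (g + 1)) * ∏ i : Fin n, X (inr i) ^ d (inr i)) *
          X (inl 2) ^ (g + 1) := by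
      rw [hd]; ring
    rw [e]
    exact Ideal.mul_mem_left _ _ (gamma_mem n g)

lemma mk_N (n g : ℕ) (p : MvPolynomial (Fin 3 ⊕ Fin n) ℂ) :
    Ideal.Quotient.mk (rel n g) (N n g p) = Ideal.Quotient.mk (rel n g) p := by
  induction p using MvPolynomial.induction_on' with
  | monomial d c =>
    rw [N_monomial, smul_eq_C_mul, map_mul, mk_nf, ← map_mul, C_mul_monomial, mul_one]
  | add p q hp hq => rw [map_add, map_add, map_add, hp, hq]

lemma N_mul_gamma (n g : ℕ) (r : MvPolynomial (Fin 3 ⊕ Fin n) ℂ) :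
    N n g (r * X (inl 2) ^ (g + 1)) = 0 := by
  induction r using MvPolynomial.induction_on' with
  | monomial d c =>
    rw [X_pow_eq_monomial, monomial_mul, mul_one, N_monomial, nf_gamma_top, smul_zero]
  | add p q hp hq => rw [add_mul, map_add, hp, hq, add_zero]

lemma N_mul_delta (n g : ℕ) (j : Fin n) (r : MvPolynomial (Fin 3 ⊕ Fin n) ℂ) :
    N n g (r * (X (inr j) ^ 2 + X (inl 1) - 2)) = 0 := by
  induction r using MvPolynomial.induction_on' with
  | monomial d c =>
    rw [mul_sub, mul_add, map_sub, map_add]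
    have e1 : (monomial d c : MvPolynomial (Fin 3 ⊕ Fin n) ℂ) * X (inr j) ^ 2
        = monomial (d + Finsupp.single (inr j) 2) c := by
      rw [X_pow_eq_monomial, monomial_mul, mul_one]
    have e2 : (monomial d c : MvPolynomial (Fin 3 ⊕ Fin n) ℂ) * X (inl 1)
        = monomial (d + Finsupp.single (inl 1) 1) c := by
      rw [show (X (inl 1) : MvPolynomial (Fin 3 ⊕ Fin n) ℂ) = X (inl 1) ^ 1 from
        (pow_one _).symm, X_pow_eq_monomial, monomial_mul, mul_one]
    have e3 : (monomial d c : MvPolynomial (Fin 3 ⊕ Fin n) ℂ) * 2 = monomial d (c * 2) := by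
      rw [show (2 : MvPolynomial (Fin 3 ⊕ Fin n) ℂ) = C 2 from
        (map_ofNat (C : ℂ →+* MvPolynomial (Fin 3 ⊕ Fin n) ℂ) 2).symm,
        mul_comm, C_mul_monomial, mul_comm]
    rw [e1, e2, e3, N_monomial, N_monomial, N_monomial, nf_delta, nf_beta]
    rw [smul_eq_C_mul, smul_eq_C_mul, smul_eq_C_mul, map_mul,
      map_ofNat (C : ℂ →+* MvPolynomial (Fin 3 ⊕ Fin n) ℂ) 2]
    ring
  | add p q hp hq => rw [add_mul, map_add, hp, hq, add_zero]

lemma N_rel (n g : ℕ) {p : MvPolynomial (Fin 3 ⊕ Fin n) ℂ} (hp : p ∈ rel n g) :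
    N n g p = 0 := by
  have key : ∀ r, N n g (r * p) = 0 := by
    refine Submodule.span_induction ?_ ?_ ?_ ?_ hp
    · intro x hx r
      rw [Set.mem_union, Set.mem_singleton_iff, Set.mem_range] at hx
      rcases hx with rfl | ⟨j, rfl⟩
      · exact N_mul_gamma n g r
      · exact N_mul_delta n g j r
    · intro r; rw [mul_zero, map_zero]
    · intro x y hx hy ihx ihy r; rw [mul_add, map_add, ihx, ihy, add_zero]
    · intro a x hx ih r; rw [smul_eq_mul, ← mul_assoc, ih]
  simpa using key 1

lemma prod_monomial (n : ℕ) (a : Fin n → ℕ) :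
    (∏ i : Fin n, (X (inr i) : MvPolynomial (Fin 3 ⊕ Fin n) ℂ) ^ a i)
      = monomial (∑ i : Fin n, Finsupp.single (inr i) (a i)) 1 := by
  classical
  have key : ∀ s : Finset (Fin n),
      (∏ i ∈ s, (X (inr i) : MvPolynomial (Fin 3 ⊕ Fin n) ℂ) ^ a i)
        = monomial (∑ i ∈ s, Finsupp.single (inr i) (a i)) 1 := by
    intro s
    induction s using Finset.induction_on with
    | empty => simp
    | insert _ _ h ih =>
      rw [Finset.prod_insert h, Finset.sum_insert h, ih, X_pow_eq_monomial,
        monomial_mul, mul_one]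
  exact key Finset.univ

lemma gen_eq_monomial (n : ℕ) (j k s : ℕ) (a : Fin n → ℕ) :
    ((X (inl 0) : MvPolynomial (Fin 3 ⊕ Fin n) ℂ) ^ j * X (inl 1) ^ k * X (inl 2) ^ s *
        ∏ i, X (inr i) ^ a i)
      = monomial (Finsupp.single (inl 0) j + Finsupp.single (inl 1) k +
          Finsupp.single (inl 2) s + ∑ i : Fin n, Finsupp.single (inr i) (a i)) 1 := by
  rw [X_pow_eq_monomial, X_pow_eq_monomial, X_pow_eq_monomial, prod_monomial,
    monomial_mul, monomial_mul, monomial_mul]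
  norm_num

/-- The exponent vector of a generating monomial. -/
noncomputable def dg (n : ℕ) (j k s : ℕ) (a : Fin n → ℕ) : (Fin 3 ⊕ Fin n) →₀ ℕ :=
  Finsupp.single (inl 0) j + Finsupp.single (inl 1) k + Finsupp.single (inl 2) s +
    ∑ i : Fin n, Finsupp.single (inr i) (a i)

lemma dg_inl0 (n j k s : ℕ) (a : Fin n → ℕ) : dg n j k s a (inl 0) = j := by
  simp [dg, Finsupp.single_apply, Finset.sum_apply', Fin.ext_iff]

lemma dg_inl1 (n j k s : ℕ) (a : Fin n → ℕ) : dg n j k s a (inl 1) = k := by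
  simp [dg, Finsupp.single_apply, Finset.sum_apply', Fin.ext_iff]

lemma dg_inl2 (n j k s : ℕ) (a : Fin n → ℕ) : dg n j k s a (inl 2) = s := by
  simp [dg, Finsupp.single_apply, Finset.sum_apply', Fin.ext_iff]

lemma dg_inr (n j k s : ℕ) (a : Fin n → ℕ) (i : Fin n) : dg n j k s a (inr i) = a i := by
  simp [dg, Finsupp.single_apply, Finset.sum_apply']

lemma gen_eq_monomial' (n : ℕ) (j k s : ℕ) (a : Fin n → ℕ) :
    ((X (inl 0) : MvPolynomial (Fin 3 ⊕ Fin n) ℂ) ^ j * X (inl 1) ^ k * X (inl 2) ^ s *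
        ∏ i, X (inr i) ^ a i)
      = monomial (dg n j k s a) 1 :=
  gen_eq_monomial n j k s a

lemma N_gen (n g : ℕ) (j k s : ℕ) (a : Fin n → ℕ) (hs : s ≤ g) (ha : ∀ i, a i ≤ 1) :
    N n g (X (inl 0) ^ j * X (inl 1) ^ k * X (inl 2) ^ s * ∏ i, X (inr i) ^ a i)
      = X (inl 0) ^ j * X (inl 1) ^ k * X (inl 2) ^ s * ∏ i, X (inr i) ^ a i := by
  conv_lhs => rw [gen_eq_monomial']
  rw [N_monomial, one_smul, nf]
  simp only [dg_inl0, dg_inl1, dg_inl2, dg_inr]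
  rw [if_pos hs]
  have hz : ∑ i : Fin n, a i / 2 = 0 :=
    Finset.sum_eq_zero (fun i _ => by have := ha i; omega)
  rw [hz, pow_zero, one_mul]
  congr 1
  refine Finset.prod_congr rfl (fun i _ => ?_)
  congr 1
  have := ha i
  omega

lemma N_fixes (n g : ℕ) {v : MvPolynomial (Fin 3 ⊕ Fin n) ℂ} (hv : v ∈ V n g) :
    N n g v = v := by
  refine Submodule.span_induction ?_ ?_ ?_ ?_ hv
  · rintro x ⟨j, k, s, a, hs, ha, rfl⟩
    exact N_gen n g j k s a hs ha
  · exact map_zero _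
  · intro x y hx hy ihx ihy; rw [map_add, ihx, ihy]
  · intro c x hx ih; rw [map_smul, ih]

lemma memV_aux (n g : ℕ) (B : ℕ) : ∀ (j k s : ℕ) (a : Fin n → ℕ), s ≤ g → (∀ i, a i ≤ 1) →
    (2 - X (inl 1)) ^ B *
      ((X (inl 0) : MvPolynomial (Fin 3 ⊕ Fin n) ℂ) ^ j * X (inl 1) ^ k * X (inl 2) ^ s *
        ∏ i, X (inr i) ^ a i) ∈ V n g := by
  induction B with
  | zero =>
    intro j k s a hs ha
    rw [pow_zero, one_mul]
    exact Submodule.subset_span ⟨j, k, s, a, hs, ha, rfl⟩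
  | succ B ih =>
    intro j k s a hs ha
    have e : (2 - X (inl 1)) ^ (B + 1) *
          ((X (inl 0) : MvPolynomial (Fin 3 ⊕ Fin n) ℂ) ^ j * X (inl 1) ^ k * X (inl 2) ^ s *
            ∏ i, X (inr i) ^ a i)
        = (2 : ℂ) • ((2 - X (inl 1)) ^ B *
            (X (inl 0) ^ j * X (inl 1) ^ k * X (inl 2) ^ s * ∏ i, X (inr i) ^ a i))
          - (2 - X (inl 1)) ^ B *
            (X (inl 0) ^ j * X (inl 1) ^ (k + 1) * X (inl 2) ^ s * ∏ i, X (inr i) ^ a i) := by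
      rw [smul_eq_C_mul, map_ofNat]
      ring
    rw [e]
    exact Submodule.sub_mem _ (Submodule.smul_mem _ _ (ih j k s a hs ha))
      (ih j (k + 1) s a hs ha)

lemma nf_mem_V (n g : ℕ) (d : (Fin 3 ⊕ Fin n) →₀ ℕ) : nf n g d ∈ V n g := by
  rw [nf]
  split
  · next h => exact memV_aux n g _ _ _ _ _ h (fun i => by omega)
  · exact Submodule.zero_mem _

lemma N_mem_V (n g : ℕ) (p : MvPolynomial (Fin 3 ⊕ Fin n) ℂ) : N n g p ∈ V n g := by
  induction p using MvPolynomial.induction_on' with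
  | monomial d c => rw [N_monomial]; exact Submodule.smul_mem _ _ (nf_mem_V n g d)
  | add p q hp hq => rw [map_add]; exact Submodule.add_mem _ hp hq

end Stmt12

open Stmt12 in
theorem stmt12 (n g : ℕ) (hn : Odd n) :
    Function.Bijective
      (fun v : V n g =>
        Ideal.Quotient.mk (rel n g) (v : MvPolynomial (Fin 3 ⊕ Fin n) ℂ)) := by
  constructor
  · intro v w h
    have hsub : (v : MvPolynomial (Fin 3 ⊕ Fin n) ℂ) - w ∈ rel n g := Ideal.Quotient.eq.mp h
    have h0 := N_rel n g hsub
    rw [map_sub, N_fixes n g v.2, N_fixes n g w.2, sub_eq_zero] at h0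
    exact Subtype.ext h0
  · intro x
    obtain ⟨p, rfl⟩ := Ideal.Quotient.mk_surjective x
    exact ⟨⟨N n g p, N_mem_V n g p⟩, mk_N n g p⟩
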